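/- Let γ ≥ 1, μ > 0, k > 0, P⁻ > 0, C > 0 and s ∈ (0, s̄) with s̄ = min{2c_s(P⁻), ((γ+1)/2)c_s(P⁻)}. There exist ε₀ > 0 and a constant C̄ > 0 such that for every ε ∈ (0, ε₀), setting P⁺ = P⁻ − ε and A = √(P⁻P⁺)·√(((P⁻)^γ − (P⁺)^γ)/ε), and for every monotone decreasing dispersive shock profile P : ℝ → [P⁺, P⁻] (a C³ solution of P'' = (2/k²)f(P) − (2sμ/k²)P' + (P')²/P with P(−∞) = P⁻, P(+∞) = P⁺, P' < 0, |P'| ≤ Cε², |P''| ≤ Cε|P'|), the function g(y) = −(1/2)·d/dy[f₂(y)/f₁(y) − μ·d/dy(1/f₁(y))] satisfies g(y) ≥ C̄|P'(y)| > 0 for all y ∈ ℝ, where f₁(y) = (s − A/P(y))² − γP(y)^{γ−1} and f₂(y) = −s + 2A/P(y). -/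

import Mathlib

set_option maxHeartbeats 1600000
open Real Filter

noncomputable def st9phi1 (γ s a p : ℝ) : ℝ := (s - a/p)^2 - γ * p^(γ-1)
noncomputable def st9phi2 (s a p : ℝ) : ℝ := -s + 2*a/p
noncomputable def st9psi1 (γ s a p : ℝ) : ℝ := 2*(s - a/p)*(a/p^2) - γ*(γ-1)*p^(γ-2)
noncomputable def st9psi1d (γ s a p : ℝ) : ℝ :=
  2*(a/p^2)^2 - 2*(s - a/p)*(2*a/p^3) - γ*(γ-1)*(γ-2)*p^(γ-3)
noncomputable def st9psi2 (a p : ℝ) : ℝ := -(2*a)/p^2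
noncomputable def st9N (γ s a p : ℝ) : ℝ :=
  st9psi2 a p * st9phi1 γ s a p - st9phi2 s a p * st9psi1 γ s a p

lemma st9_hasDerivAt_div (a : ℝ) {p : ℝ} (hp : p ≠ 0) :
    HasDerivAt (fun q : ℝ => a / q) (-(a/p^2)) p := by
  have := (hasDerivAt_const p a).div (hasDerivAt_id p) hp
  refine this.congr_deriv ?_
  simp only [id]; ring

lemma st9_hasDerivAt_phi1 (γ s a : ℝ) {p : ℝ} (hp : 0 < p) :
    HasDerivAt (fun q => st9phi1 γ s a q) (st9psi1 γ s a p) p := by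
  have h1 : HasDerivAt (fun q : ℝ => (s - a/q)^2)
      (2 * (s - a/p)^1 * (0 - -(a/p^2))) p :=
    (((hasDerivAt_const p s).sub (st9_hasDerivAt_div a hp.ne')).pow 2)
  have h2 : HasDerivAt (fun q : ℝ => γ * q^(γ-1)) (γ * ((γ-1) * p^(γ-1-1))) p :=
    (Real.hasDerivAt_rpow_const (Or.inl hp.ne')).const_mul γ
  have := h1.sub h2
  have e : γ - 1 - 1 = γ - 2 := by ring
  rw [e] at this
  refine this.congr_deriv ?_
  unfold st9psi1
  ring

lemma st9_hasDerivAt_phi2 (s a : ℝ) {p : ℝ} (hp : p ≠ 0) :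
    HasDerivAt (fun q => st9phi2 s a q) (st9psi2 a p) p := by
  have := (hasDerivAt_const p (-s)).add ((st9_hasDerivAt_div a hp).const_mul 2)
  have e : (fun q => st9phi2 s a q) = (fun x => -s) + fun y => 2 * (a / y) := by
    funext q; unfold st9phi2; simp only [Pi.add_apply]; ring
  rw [e]; refine this.congr_deriv ?_
  unfold st9psi2; ring

lemma st9_hasDerivAt_psi1 (γ s a : ℝ) {p : ℝ} (hp : 0 < p) :
    HasDerivAt (fun q => st9psi1 γ s a q) (st9psi1d γ s a p) p := by
  have hp2 : (p:ℝ)^2 ≠ 0 := pow_ne_zero 2 hp.ne'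
  have hd : HasDerivAt (fun q : ℝ => a / q^2) (-(2*a/p^3)) p := by
    have := (hasDerivAt_const p a).div ((hasDerivAt_id p).pow 2) hp2
    refine this.congr_deriv ?_
    simp only [id, Pi.pow_apply]
    field_simp
    ring
  have h1 : HasDerivAt (fun q : ℝ => 2*(s - a/q)*(a/q^2))
      ((2 * (0 - -(a/p^2))) * (a/p^2) + 2*(s - a/p) * (-(2*a/p^3))) p :=
    (((hasDerivAt_const p s).sub (st9_hasDerivAt_div a hp.ne')).const_mul 2).mul hd
  have h2 : HasDerivAt (fun q : ℝ => γ*(γ-1)*q^(γ-2)) (γ*(γ-1) * ((γ-2) * p^(γ-2-1))) p :=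
    (Real.hasDerivAt_rpow_const (Or.inl hp.ne')).const_mul (γ*(γ-1))
  have := h1.sub h2
  have e : γ - 2 - 1 = γ - 3 := by ring
  rw [e] at this
  refine this.congr_deriv ?_
  unfold st9psi1d
  ring

lemma st9_contAt_rpow (r : ℝ) {x₀ : ℝ × ℝ} (h : x₀.2 ≠ 0) :
    ContinuousAt (fun x : ℝ × ℝ => x.2 ^ r) x₀ :=
  (Real.continuousAt_rpow_const _ _ (Or.inl h)).comp continuousAt_snd

lemma st9_contAt_phi1 (γ s : ℝ) {x₀ : ℝ × ℝ} (h : x₀.2 ≠ 0) :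
    ContinuousAt (fun x : ℝ × ℝ => st9phi1 γ s x.1 x.2) x₀ := by
  unfold st9phi1
  exact (((continuousAt_const.sub (continuousAt_fst.div continuousAt_snd h)).pow 2).sub
    (continuousAt_const.mul (st9_contAt_rpow (γ-1) h)))

lemma st9_contAt_psi1 (γ s : ℝ) {x₀ : ℝ × ℝ} (h : x₀.2 ≠ 0) :
    ContinuousAt (fun x : ℝ × ℝ => st9psi1 γ s x.1 x.2) x₀ := by
  have h2 : x₀.2 ^ 2 ≠ 0 := pow_ne_zero 2 h
  unfold st9psi1
  exact ((continuousAt_const.mul (continuousAt_const.sub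
      (continuousAt_fst.div continuousAt_snd h))).mul
      (continuousAt_fst.div (continuousAt_snd.pow 2) h2)).sub
    (continuousAt_const.mul (st9_contAt_rpow (γ-2) h))

lemma st9_contAt_psi1d (γ s : ℝ) {x₀ : ℝ × ℝ} (h : x₀.2 ≠ 0) :
    ContinuousAt (fun x : ℝ × ℝ => st9psi1d γ s x.1 x.2) x₀ := by
  have h2 : x₀.2 ^ 2 ≠ 0 := pow_ne_zero 2 h
  have h3 : x₀.2 ^ 3 ≠ 0 := pow_ne_zero 3 h
  unfold st9psi1d
  exact (((continuousAt_fst.div (continuousAt_snd.pow 2) h2).pow 2).const_mul 2 |>.sub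
    ((continuousAt_const.mul (continuousAt_const.sub
      (continuousAt_fst.div continuousAt_snd h))).mul
      ((continuousAt_fst.const_mul 2).div (continuousAt_snd.pow 3) h3))).sub
    (continuousAt_const.mul (st9_contAt_rpow (γ-3) h))

lemma st9_contAt_N (γ s : ℝ) {x₀ : ℝ × ℝ} (h : x₀.2 ≠ 0) :
    ContinuousAt (fun x : ℝ × ℝ => st9N γ s x.1 x.2) x₀ := by
  have h2 : x₀.2 ^ 2 ≠ 0 := pow_ne_zero 2 h
  unfold st9N st9psi2 st9phi2
  exact (((continuousAt_fst.const_mul 2).neg.div (continuousAt_snd.pow 2) h2).mul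
      (st9_contAt_phi1 γ s h)).sub
    ((continuousAt_const.add ((continuousAt_fst.const_mul 2).div continuousAt_snd h)).mul
      (st9_contAt_psi1 γ s h))

lemma st9_N_value' (γ s Pm u c : ℝ) (hPm : Pm ≠ 0) (hγ : γ ≠ 0) (hc2 : c^2 = γ*u) :
    st9psi2 (Pm*c) Pm * ((s - Pm*c/Pm)^2 - γ*u)
      - st9phi2 s (Pm*c) Pm * (2*(s-Pm*c/Pm)*(Pm*c/Pm^2) - γ*(γ-1)*(u/Pm))
      = (γ+1)*(γ*u)*(2*c-s)/Pm := by
  have hu : u = c^2/γ := by field_simp [hc2]; linear_combination -hc2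
  rw [hu]
  unfold st9psi2 st9phi2
  field_simp
  ring

lemma st9_N_value (γ s Pm : ℝ) (hPm : 0 < Pm) (hγ : 0 < γ) :
    st9N γ s (Pm * Real.sqrt (γ * Pm ^ (γ-1))) Pm
      = (γ+1) * (γ * Pm ^ (γ-1)) * (2 * Real.sqrt (γ * Pm ^ (γ-1)) - s) / Pm := by
  have hPm2 : Pm^(γ-2) = Pm^(γ-1) / Pm := by
    rw [show γ-2 = (γ-1)-1 by ring, Real.rpow_sub hPm, Real.rpow_one]
  have hc2 : (Real.sqrt (γ * Pm ^ (γ-1)))^2 = γ * Pm ^ (γ-1) :=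
    Real.sq_sqrt (by positivity)
  unfold st9N st9phi1 st9psi1
  rw [hPm2]
  exact st9_N_value' γ s Pm (Pm ^ (γ-1)) _ hPm.ne' hγ.ne' hc2

lemma st9_limA (γ Pm : ℝ) (hPm : 0 < Pm) :
    Tendsto (fun ε => Real.sqrt (Pm*(Pm-ε)) * Real.sqrt ((Pm^γ - (Pm-ε)^γ)/ε))
      (nhdsWithin 0 (Set.Ioi 0)) (nhds (Pm * Real.sqrt (γ * Pm^(γ-1)))) := by
  have hcont : Continuous (fun ε : ℝ => Pm - ε) := by fun_prop
  have hsub : Tendsto (fun ε : ℝ => Pm - ε) (nhds 0) (nhds Pm) := by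
    simpa using hcont.tendsto 0
  have T1 : Tendsto (fun ε : ℝ => Real.sqrt (Pm*(Pm-ε))) (nhdsWithin 0 (Set.Ioi 0)) (nhds Pm) := by
    have : Tendsto (fun ε : ℝ => Real.sqrt (Pm*(Pm-ε))) (nhds 0)
        (nhds (Real.sqrt (Pm * Pm))) := (tendsto_const_nhds.mul hsub).sqrt
    rw [Real.sqrt_mul_self hPm.le] at this
    exact this.mono_left nhdsWithin_le_nhds
  have hd : HasDerivAt (fun x : ℝ => x ^ γ) (γ * Pm ^ (γ-1)) Pm :=
    Real.hasDerivAt_rpow_const (Or.inl hPm.ne')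
  have hslope := hasDerivAt_iff_tendsto_slope.mp hd
  have hmap : Tendsto (fun ε : ℝ => Pm - ε) (nhdsWithin 0 (Set.Ioi 0))
      (nhdsWithin Pm {Pm}ᶜ) := by
    apply tendsto_nhdsWithin_of_tendsto_nhds_of_eventually_within
    · exact hsub.mono_left nhdsWithin_le_nhds
    · filter_upwards [self_mem_nhdsWithin] with ε hε
      have : (0:ℝ) < ε := hε
      simp only [Set.mem_compl_iff, Set.mem_singleton_iff]
      intro h; nlinarith
  have T2i : Tendsto (fun ε : ℝ => (Pm^γ - (Pm-ε)^γ)/ε) (nhdsWithin 0 (Set.Ioi 0))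
      (nhds (γ * Pm ^ (γ-1))) := by
    have comp := hslope.comp hmap
    have heq : (fun ε : ℝ => (Pm^γ - (Pm-ε)^γ)/ε) = (slope (fun x : ℝ => x ^ γ) Pm) ∘
        (fun ε : ℝ => Pm - ε) := by
      funext ε
      simp only [Function.comp_apply, slope_def_field]
      rw [show Pm - ε - Pm = -ε by ring, div_neg, ← neg_div, neg_sub]
    rw [heq]
    exact comp
  exact T1.mul T2i.sqrt

/-- the weight function
`g(y) = −(1/2)·d/dy[f₂/f₁ − μ·d/dy(1/f₁)]` satisfies `g(y) ≥ C̄|P'(y)| > 0` along a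
small-amplitude monotone decreasing dispersive shock profile. -/
theorem statement_9 (γ μ k Pm C s : ℝ) (hγ : 1 ≤ γ) (hμ : 0 < μ) (hk : 0 < k)
    (hPm : 0 < Pm) (hC : 0 < C) (hs : 0 < s)
    (hs' : s < min (2 * Real.sqrt (γ * Pm ^ (γ - 1)))
      (((γ + 1) / 2) * Real.sqrt (γ * Pm ^ (γ - 1)))) :
    ∃ ε₀ > (0:ℝ), ∃ Cbar > (0:ℝ), ∀ ε : ℝ, 0 < ε → ε < ε₀ →
      ∀ A : ℝ, A = Real.sqrt (Pm * (Pm - ε)) * Real.sqrt ((Pm ^ γ - (Pm - ε) ^ γ) / ε) →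
      ∀ P : ℝ → ℝ, ContDiff ℝ 3 P →
        (∀ y : ℝ, P y ∈ Set.Icc (Pm - ε) Pm) →
        (∀ y : ℝ, deriv (deriv P) y =
          (2 / k ^ 2) *
            ((P y) ^ γ + (Pm * (Pm - ε) / P y) * (((Pm - ε) ^ γ - Pm ^ γ) / ((Pm - ε) - Pm))
              - ((Pm - ε) ^ (γ + 1) - Pm ^ (γ + 1)) / ((Pm - ε) - Pm))
          - (2 * s * μ / k ^ 2) * deriv P y + (deriv P y) ^ 2 / P y) →
        Filter.Tendsto P Filter.atBot (nhds Pm) →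
        Filter.Tendsto P Filter.atTop (nhds (Pm - ε)) →
        (∀ y : ℝ, deriv P y < 0) →
        (∀ y : ℝ, |deriv P y| ≤ C * ε ^ 2) →
        (∀ y : ℝ, |deriv (deriv P) y| ≤ C * ε * |deriv P y|) →
      ∀ f₁ f₂ : ℝ → ℝ,
        (∀ y : ℝ, f₁ y = (s - A / P y) ^ 2 - γ * (P y) ^ (γ - 1)) →
        (∀ y : ℝ, f₂ y = -s + 2 * A / P y) →
      ∀ g : ℝ → ℝ,
        (∀ y : ℝ, g y =
          -(1 / 2) * deriv (fun x => f₂ x / f₁ x - μ * deriv (fun t => 1 / f₁ t) x) y) →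
      ∀ y : ℝ, Cbar * |deriv P y| ≤ g y ∧ 0 < Cbar * |deriv P y| := by
  have hγ0 : (0:ℝ) < γ := lt_of_lt_of_le one_pos hγ
  set c : ℝ := Real.sqrt (γ * Pm ^ (γ - 1)) with hc
  have hcpos : 0 < c := Real.sqrt_pos.mpr (by positivity)
  have hs2c : s < 2 * c := (lt_min_iff.mp hs').1
  set a₀ : ℝ := Pm * c with ha₀
  have hx₀ne : ((a₀, Pm) : ℝ × ℝ).2 ≠ 0 := hPm.ne'
  -- value of phi1 at the limit point
  have hdivc : a₀ / Pm = c := by rw [ha₀]; field_simp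
  set L : ℝ := st9phi1 γ s a₀ Pm with hL
  have hLval : L = (s - c)^2 - c^2 := by
    rw [hL]; unfold st9phi1; rw [hdivc]
    have : γ * Pm ^ (γ - 1) = c^2 := (Real.sq_sqrt (by positivity)).symm
    rw [this]
  have hLneg : L < 0 := by rw [hLval]; nlinarith
  set N₀ : ℝ := st9N γ s a₀ Pm with hN₀def
  have hN₀ : 0 < N₀ := by
    rw [hN₀def, ha₀, hc, st9_N_value γ s Pm hPm hγ0]
    apply div_pos _ hPm
    apply mul_pos (mul_pos (by linarith) (by positivity))
    rw [← hc]; linarith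
  set δ : ℝ := -L/2 with hδ
  have hδpos : 0 < δ := by rw [hδ]; linarith
  set M : ℝ := -L + 1 with hM
  have hMpos : 0 < M := by rw [hM]; linarith
  set K : ℝ := |st9psi1 γ s a₀ Pm| + 1 with hK
  have hKpos : 0 < K := by positivity
  set K' : ℝ := |st9psi1d γ s a₀ Pm| + 1 with hK'
  have hK'pos : 0 < K' := by positivity
  -- the neighborhood where all bounds hold
  have hv1 : N₀/2 < st9N γ s a₀ Pm := by rw [← hN₀def]; linarith
  have hv2 : |st9phi1 γ s a₀ Pm| < M := by
    rw [← hL, abs_of_neg hLneg, hM]; linarith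
  have hv3 : δ < |st9phi1 γ s a₀ Pm| := by
    rw [← hL, abs_of_neg hLneg, hδ]; linarith
  have hv4 : |st9psi1 γ s a₀ Pm| < K := by rw [hK]; linarith
  have hv5 : |st9psi1d γ s a₀ Pm| < K' := by rw [hK']; linarith
  have e1 : ∀ᶠ x : ℝ × ℝ in nhds (a₀, Pm), N₀/2 < st9N γ s x.1 x.2 :=
    (st9_contAt_N γ s hx₀ne).eventually (eventually_gt_nhds hv1)
  have e2 : ∀ᶠ x : ℝ × ℝ in nhds (a₀, Pm), |st9phi1 γ s x.1 x.2| < M :=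
    ((st9_contAt_phi1 γ s hx₀ne).abs).eventually (eventually_lt_nhds hv2)
  have e3 : ∀ᶠ x : ℝ × ℝ in nhds (a₀, Pm), δ < |st9phi1 γ s x.1 x.2| :=
    ((st9_contAt_phi1 γ s hx₀ne).abs).eventually (eventually_gt_nhds hv3)
  have e4 : ∀ᶠ x : ℝ × ℝ in nhds (a₀, Pm), |st9psi1 γ s x.1 x.2| < K :=
    ((st9_contAt_psi1 γ s hx₀ne).abs).eventually (eventually_lt_nhds hv4)
  have e5 : ∀ᶠ x : ℝ × ℝ in nhds (a₀, Pm), |st9psi1d γ s x.1 x.2| < K' :=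
    ((st9_contAt_psi1d γ s hx₀ne).abs).eventually (eventually_lt_nhds hv5)
  obtain ⟨η, hηpos, hball⟩ := Metric.eventually_nhds_iff.mp (e1.and (e2.and (e3.and (e4.and e5))))
  -- the limit of A
  have hAev : ∀ᶠ ε in nhdsWithin (0:ℝ) (Set.Ioi 0),
      dist (Real.sqrt (Pm*(Pm-ε)) * Real.sqrt ((Pm^γ - (Pm-ε)^γ)/ε)) a₀ < η :=
    Metric.tendsto_nhds.mp (st9_limA γ Pm hPm) η hηpos
  rw [eventually_nhdsWithin_iff, Metric.eventually_nhds_iff] at hAev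
  obtain ⟨ε₁, hε₁pos, hsubA⟩ := hAev
  -- constants
  set Λ : ℝ := μ/2 * ((K' + K) * C / δ^2 + 2*K^2*C/δ^3) with hΛdef
  have hΛ : 0 < Λ := by rw [hΛdef]; positivity
  set Cbar : ℝ := N₀ / (8 * M^2) with hCbardef
  have hCbar : 0 < Cbar := by rw [hCbardef]; positivity
  refine ⟨min ε₁ (min (Pm/2) (min 1 (min η (Cbar/Λ)))), by positivity, Cbar, hCbar, ?_⟩
  intro ε hε hεε₀ A hA P hP3 hPrange hODE hBot hTop hP' hP'bd hP''bd f₁ f₂ hf₁ hf₂ g hg y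
  -- unpack smallness of ε
  have hεε₁ : ε < ε₁ := lt_of_lt_of_le hεε₀ (min_le_left _ _)
  have hεPm : ε < Pm/2 := lt_of_lt_of_le hεε₀ ((min_le_right _ _).trans (min_le_left _ _))
  have hε1 : ε < 1 := lt_of_lt_of_le hεε₀
    ((min_le_right _ _).trans ((min_le_right _ _).trans (min_le_left _ _)))
  have hεη : ε < η := lt_of_lt_of_le hεε₀
    ((min_le_right _ _).trans ((min_le_right _ _).trans ((min_le_right _ _).trans (min_le_left _ _))))
  have hεCΛ : ε < Cbar/Λ := lt_of_lt_of_le hεε₀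
    ((min_le_right _ _).trans ((min_le_right _ _).trans ((min_le_right _ _).trans (min_le_right _ _))))
  have hεΛ : ε * Λ ≤ Cbar := by
    rw [lt_div_iff₀ hΛ] at hεCΛ; linarith only [hεCΛ]
  -- positivity of P
  have hPpos : ∀ t : ℝ, 0 < P t := by
    intro t
    have h1 := (hPrange t).1
    linarith
  -- A is in the ball
  have hAdist : dist A a₀ < η := by
    rw [hA]
    refine hsubA (y := ε) ?_ hε
    rw [Real.dist_eq, sub_zero, abs_of_pos hε]; exact hεε₁
  -- the condition holds at (A, P t) for every t
  have hcond : ∀ t : ℝ, N₀/2 < st9N γ s A (P t) ∧ |st9phi1 γ s A (P t)| < M ∧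
      δ < |st9phi1 γ s A (P t)| ∧ |st9psi1 γ s A (P t)| < K ∧ |st9psi1d γ s A (P t)| < K' := by
    intro t
    have hd : dist ((A, P t) : ℝ × ℝ) (a₀, Pm) < η := by
      rw [Prod.dist_eq]
      refine max_lt hAdist ?_
      show dist (P t) Pm < η
      rw [Real.dist_eq]
      have h1 := (hPrange t).1
      have h2 := (hPrange t).2
      rw [abs_lt]
      constructor <;> linarith
    exact hball hd
  -- basic differentiability facts
  have hdiffP : Differentiable ℝ P := hP3.differentiable (by norm_num)
  have hP1 : ∀ t : ℝ, HasDerivAt P (deriv P t) t := fun t => (hdiffP t).hasDerivAt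
  have hdiffP' : Differentiable ℝ (deriv P) := by
    have h3 : ContDiff ℝ ((2:ℕ∞)+1) P := by norm_num; exact hP3
    exact (contDiff_succ_iff_deriv.mp h3).2.2.differentiable (by norm_num)
  have hP2 : ∀ t : ℝ, HasDerivAt (deriv P) (deriv (deriv P) t) t :=
    fun t => (hdiffP' t).hasDerivAt
  -- f₁ and f₂ as compositions
  have hf₁e : ∀ t : ℝ, f₁ t = st9phi1 γ s A (P t) := fun t => hf₁ t
  have hf₂e : ∀ t : ℝ, f₂ t = st9phi2 s A (P t) := fun t => hf₂ t
  have hf₁fun : f₁ = fun t => st9phi1 γ s A (P t) := funext hf₁e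
  have hf₂fun : f₂ = fun t => st9phi2 s A (P t) := funext hf₂e
  have hf₁ne : ∀ t : ℝ, f₁ t ≠ 0 := by
    intro t
    have := (hcond t).2.2.1
    rw [hf₁e t]
    intro h
    rw [h, abs_zero] at this
    linarith
  have hf₁d : ∀ t : ℝ, HasDerivAt f₁ (st9psi1 γ s A (P t) * deriv P t) t := by
    intro t
    rw [hf₁fun]
    exact (st9_hasDerivAt_phi1 γ s A (hPpos t)).comp t (hP1 t)
  have hf₂d : ∀ t : ℝ, HasDerivAt f₂ (st9psi2 A (P t) * deriv P t) t := by
    intro t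
    rw [hf₂fun]
    exact (st9_hasDerivAt_phi2 s A (hPpos t).ne').comp t (hP1 t)
  -- derivative of 1/f₁
  have hinv : ∀ t : ℝ, HasDerivAt (fun x => 1 / f₁ x)
      (-(st9psi1 γ s A (P t) * deriv P t) / f₁ t ^ 2) t := by
    intro t
    have h := (hf₁d t).inv (hf₁ne t)
    simp only [one_div]; exact h
  have hderivinv : deriv (fun x => 1 / f₁ x)
      = fun t => -(st9psi1 γ s A (P t) * deriv P t) / f₁ t ^ 2 :=
    funext fun t => (hinv t).deriv
  -- abbreviations at y
  set q : ℝ := deriv P y with hqdef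
  set q' : ℝ := deriv (deriv P) y with hq'def
  set ψ₁ : ℝ := st9psi1 γ s A (P y) with hψ₁def
  set ψd : ℝ := st9psi1d γ s A (P y) with hψddef
  set ψ₂ : ℝ := st9psi2 A (P y) with hψ₂def
  set F : ℝ := f₁ y with hFdef
  have hFne : F ≠ 0 := hf₁ne y
  have hF2ne : F^2 ≠ 0 := pow_ne_zero 2 hFne
  -- derivative of the whole inner function
  have part1 : HasDerivAt (fun x => f₂ x / f₁ x)
      ((st9psi2 A (P y) * q * F - f₂ y * (ψ₁ * q)) / F^2) y :=
    (hf₂d y).div (hf₁d y) hFne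
  have hu : HasDerivAt (fun x => st9psi1 γ s A (P x)) (ψd * q) y :=
    (st9_hasDerivAt_psi1 γ s A (hPpos y)).comp y (hP1 y)
  have huv : HasDerivAt (fun x => st9psi1 γ s A (P x) * deriv P x)
      (ψd * q * q + ψ₁ * q') y := hu.mul (hP2 y)
  have part2 : HasDerivAt (fun x => -(st9psi1 γ s A (P x) * deriv P x) / f₁ x ^ 2)
      ((-(ψd * q * q + ψ₁ * q') * F^2 + ψ₁ * q * (2 * F * (ψ₁ * q))) / F^4) y := by
    have h := (huv.neg).div ((hf₁d y).pow 2) hF2ne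
    refine h.congr_deriv ?_
    simp only [Pi.pow_apply, Pi.neg_apply, hFdef, hψ₁def, hqdef, Nat.cast_ofNat]
    ring
  have whole : HasDerivAt (fun x => f₂ x / f₁ x
      - μ * (-(st9psi1 γ s A (P x) * deriv P x) / f₁ x ^ 2))
      ((ψ₂ * q * F - f₂ y * (ψ₁ * q)) / F^2
        - μ * ((-(ψd * q * q + ψ₁ * q') * F^2 + ψ₁ * q * (2 * F * (ψ₁ * q))) / F^4)) y :=
    part1.sub (part2.const_mul μ)
  -- value of g at y
  have hGeq : (fun x => f₂ x / f₁ x - μ * deriv (fun t => 1 / f₁ t) x)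
      = (fun x => f₂ x / f₁ x - μ * (-(st9psi1 γ s A (P x) * deriv P x) / f₁ x ^ 2)) := by
    funext x
    rw [hderivinv]
  have hNval : st9N γ s A (P y) = ψ₂ * F - f₂ y * ψ₁ := by
    unfold st9N
    rw [← hψ₂def, ← hψ₁def]
    rw [show st9phi1 γ s A (P y) = F from (hf₁e y).symm ▸ rfl,
        show st9phi2 s A (P y) = f₂ y from (hf₂e y).symm]
  have hkey : g y = (-q) * st9N γ s A (P y) / (2 * F^2)
      + μ/2 * ((-(ψd * q^2 + ψ₁ * q')) / F^2 + 2 * ψ₁^2 * q^2 / F^3) := by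
    rw [hg y, hGeq, whole.deriv, hNval]
    field_simp
    ring
  -- estimates
  have hqneg : q < 0 := hP' y
  have hqabs : |q| = -q := abs_of_neg hqneg
  have hqabspos : 0 < |q| := abs_pos.mpr hqneg.ne
  have hNy : N₀/2 < st9N γ s A (P y) := (hcond y).1
  have hphiM : |st9phi1 γ s A (P y)| < M := (hcond y).2.1
  have hphiδ : δ < |st9phi1 γ s A (P y)| := (hcond y).2.2.1
  have hFM : |F| < M := by rw [hFdef, hf₁e y]; exact hphiM
  have hFδ : δ < |F| := by rw [hFdef, hf₁e y]; exact hphiδ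
  have hψ₁K : |ψ₁| ≤ K := le_of_lt (hcond y).2.2.2.1
  have hψdK : |ψd| ≤ K' := le_of_lt (hcond y).2.2.2.2
  have hF2l : δ^2 ≤ F^2 := by
    rw [← sq_abs F]
    exact pow_le_pow_left₀ hδpos.le hFδ.le 2
  have hF2u : F^2 ≤ M^2 := by
    rw [← sq_abs F]
    exact pow_le_pow_left₀ (abs_nonneg F) hFM.le 2
  have hF3l : δ^3 ≤ |F|^3 := pow_le_pow_left₀ hδpos.le hFδ.le 3
  have hF2pos : 0 < F^2 := lt_of_lt_of_le (by positivity) hF2l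
  -- bound on q² and q'
  have hε2 : ε^2 ≤ ε := by
    calc ε^2 = ε * ε := sq ε
      _ ≤ 1 * ε := mul_le_mul_of_nonneg_right hε1.le hε.le
      _ = ε := one_mul ε
  have hq2 : q^2 ≤ C * ε * |q| := by
    have h1 := hP'bd y
    rw [← hqdef] at h1
    have h2 : q^2 = |q| * |q| := by rw [← abs_mul, abs_of_nonneg (mul_self_nonneg q)]; ring
    calc q^2 = |q| * |q| := h2
      _ ≤ (C * ε^2) * |q| := mul_le_mul_of_nonneg_right h1 (abs_nonneg q)
      _ ≤ (C * ε) * |q| := by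
          apply mul_le_mul_of_nonneg_right _ (abs_nonneg q)
          exact mul_le_mul_of_nonneg_left hε2 hC.le
      _ = C * ε * |q| := rfl
  have hq'b : |q'| ≤ C * ε * |q| := hP''bd y
  -- main term lower bound
  have hmain : 2 * Cbar * |q| ≤ (-q) * st9N γ s A (P y) / (2 * F^2) := by
    have h1 : N₀/2 / (2 * M^2) ≤ st9N γ s A (P y) / (2 * F^2) := by
      apply div_le_div₀ (by linarith) hNy.le (by positivity) (by linarith)
    have h2 : 2 * Cbar = N₀/2 / (2 * M^2) := by
      rw [hCbardef]; field_simp; ring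
    calc 2 * Cbar * |q| = |q| * (N₀/2 / (2 * M^2)) := by rw [h2]; ring
      _ ≤ |q| * (st9N γ s A (P y) / (2 * F^2)) := by
          apply mul_le_mul_of_nonneg_left h1 (abs_nonneg q)
      _ = (-q) * st9N γ s A (P y) / (2 * F^2) := by rw [hqabs]; ring
  -- error term bound
  have habs1 : |ψd * q^2 + ψ₁ * q'| ≤ (K' + K) * (C * ε * |q|) := by
    have h1 : |ψd * q^2| ≤ K' * (C * ε * |q|) := by
      rw [abs_mul, abs_of_nonneg (sq_nonneg q)]
      exact mul_le_mul hψdK hq2 (sq_nonneg q) hK'pos.le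
    have h2 : |ψ₁ * q'| ≤ K * (C * ε * |q|) := by
      rw [abs_mul]
      exact mul_le_mul hψ₁K hq'b (abs_nonneg q') hKpos.le
    calc |ψd * q^2 + ψ₁ * q'| ≤ |ψd * q^2| + |ψ₁ * q'| := abs_add_le _ _
      _ ≤ K' * (C * ε * |q|) + K * (C * ε * |q|) := add_le_add h1 h2
      _ = (K' + K) * (C * ε * |q|) := by ring
  have hT1 : |(-(ψd * q^2 + ψ₁ * q')) / F^2| ≤ (K' + K) * (C * ε * |q|) / δ^2 := by
    rw [abs_div, abs_neg, abs_of_nonneg (sq_nonneg F)]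
    exact div_le_div₀ (by positivity) habs1 (by positivity) hF2l
  have hT2 : |2 * ψ₁^2 * q^2 / F^3| ≤ 2 * K^2 * (C * ε * |q|) / δ^3 := by
    rw [abs_div]
    have hnum : |2 * ψ₁^2 * q^2| ≤ 2 * K^2 * (C * ε * |q|) := by
      rw [abs_of_nonneg (by positivity : (0:ℝ) ≤ 2 * ψ₁^2 * q^2)]
      have hψsq : ψ₁^2 ≤ K^2 := by
        rw [← sq_abs ψ₁]
        exact pow_le_pow_left₀ (abs_nonneg ψ₁) hψ₁K 2
      calc 2 * ψ₁^2 * q^2 ≤ 2 * K^2 * q^2 := by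
            apply mul_le_mul_of_nonneg_right _ (sq_nonneg q)
            have := mul_le_mul_of_nonneg_left hψsq (by norm_num : (0:ℝ) ≤ 2)
            linarith only [this]
        _ ≤ 2 * K^2 * (C * ε * |q|) := by
            apply mul_le_mul_of_nonneg_left hq2
            positivity
    have hden : δ^3 ≤ |F^3| := by rw [abs_pow]; exact hF3l
    exact div_le_div₀ (by positivity) hnum (by positivity) hden
  have hR : |μ/2 * ((-(ψd * q^2 + ψ₁ * q')) / F^2 + 2 * ψ₁^2 * q^2 / F^3)| ≤ ε * Λ * |q| := by
    rw [abs_mul, abs_of_nonneg (by positivity : (0:ℝ) ≤ μ/2)]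
    have h1 : |(-(ψd * q^2 + ψ₁ * q')) / F^2 + 2 * ψ₁^2 * q^2 / F^3|
        ≤ (K' + K) * (C * ε * |q|) / δ^2 + 2 * K^2 * (C * ε * |q|) / δ^3 :=
      (abs_add_le _ _).trans (add_le_add hT1 hT2)
    calc μ/2 * |(-(ψd * q^2 + ψ₁ * q')) / F^2 + 2 * ψ₁^2 * q^2 / F^3|
        ≤ μ/2 * ((K' + K) * (C * ε * |q|) / δ^2 + 2 * K^2 * (C * ε * |q|) / δ^3) := by
          apply mul_le_mul_of_nonneg_left h1 (by positivity)
      _ = ε * Λ * |q| := by rw [hΛdef]; field_simp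
  -- conclusion
  have hεΛq : ε * Λ * |q| ≤ Cbar * |q| :=
    mul_le_mul_of_nonneg_right hεΛ (abs_nonneg q)
  constructor
  · rw [hkey]
    have hRlow : -(Cbar * |q|) ≤ μ/2 * ((-(ψd * q^2 + ψ₁ * q')) / F^2 + 2 * ψ₁^2 * q^2 / F^3) := by
      have := neg_abs_le (μ/2 * ((-(ψd * q^2 + ψ₁ * q')) / F^2 + 2 * ψ₁^2 * q^2 / F^3))
      have h2 : -(ε * Λ * |q|) ≤ μ/2 * ((-(ψd * q^2 + ψ₁ * q')) / F^2 + 2 * ψ₁^2 * q^2 / F^3) := by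
        linarith only [hR, this]
      linarith only [h2, hεΛq]
    linarith only [hmain, hRlow]
  · positivity
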